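/- Let G be an abelian group, g ∈ G with g² ≠ 1, K an infinite field, and consider commutators f = [[x_g, y₁^{(k₁)}, …, y_n^{(k_n)}], [x_{g⁻¹}, y₁^{(l₁)}, …, y_n^{(l_n)}]] and h = [[x_g, y₁^{(k'₁)}, …, y_m^{(k'_m)}], [x_{g⁻¹}, y₁^{(l'₁)}, …, y_m^{(l'_m)}]] with all exponents non-negative. To such a commutator f associate V_f = ((k₁,l₁), …, (k_n,l_n)) ∈ D(ℕ₀²). If V_f ⪯ V_h in the Higman order on D(ℕ₀²), then h ∈ ⟨f⟩^{T_G} + Id_G(UT₃⁽⁻⁾, Γ(g,g⁻¹)). -/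

import Mathlib

open FreeLieAlgebra

/-- The free `G`-graded Lie algebra over `K` on variables `x_{i,g}`, `i ∈ ℕ`, `g ∈ G`. -/
abbrev FL (K : Type*) [Field K] (G : Type*) := FreeLieAlgebra K (ℕ × G)

section Framework

variable (K : Type*) [Field K] (G : Type*) [CommGroup G]

/-- `IsHom K G g a` : `a` is homogeneous of degree `g` in the free graded Lie algebra. -/
inductive IsHom : G → FL K G → Prop
  | var (i : ℕ) (g : G) : IsHom g (of K (i, g))
  | zero (g : G) : IsHom g 0
  | add {g : G} {a b : FL K G} : IsHom g a → IsHom g b → IsHom g (a + b)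
  | smul {g : G} {a : FL K G} (c : K) : IsHom g a → IsHom g (c • a)
  | lie {g h : G} {a b : FL K G} : IsHom g a → IsHom h b → IsHom (g * h) ⁅a, b⁆

/-- A graded substitution: an endomorphism sending each variable `x_{i,g}` to a homogeneous
element of degree `g`. -/
def IsGradedSubst (φ : FL K G →ₗ⁅K⁆ FL K G) : Prop :=
  ∀ (i : ℕ) (g : G), IsHom K G g (φ (of K (i, g)))

/-- A `T_G`-ideal: a Lie ideal invariant under all graded substitutions. -/
def IsTIdeal (I : LieIdeal K (FL K G)) : Prop :=
  ∀ φ : FL K G →ₗ⁅K⁆ FL K G, IsGradedSubst K G φ → ∀ a ∈ I, φ a ∈ I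

/-- The `T_G`-ideal generated by a set `S`. -/
noncomputable def tClosure (S : Set (FL K G)) : LieIdeal K (FL K G) :=
  sInf {I : LieIdeal K (FL K G) | IsTIdeal K G I ∧ S ⊆ ↑I}

/-- The graded polynomial identities of a `G`-graded Lie algebra `(A, Γ)`, as a Lie ideal of the
free graded Lie algebra. -/
def gradedIdeal (A : Type*) [LieRing A] [LieAlgebra K A] (Γ : G → Submodule K A) :
    LieIdeal K (FL K G) where
  carrier := {f | ∀ ψ : FL K G →ₗ⁅K⁆ A, (∀ (i : ℕ) (g : G), ψ (of K (i, g)) ∈ Γ g) → ψ f = 0}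
  add_mem' := by
    intro a b ha hb ψ hψ
    rw [map_add ψ, ha ψ hψ, hb ψ hψ, add_zero]
  zero_mem' := by
    intro ψ _
    exact ψ.map_zero
  smul_mem' := by
    intro c a ha ψ hψ
    rw [map_smul ψ, ha ψ hψ, smul_zero]
  lie_mem := by
    intro x m hm ψ hψ
    rw [ψ.map_lie, hm ψ hψ, lie_zero]

/-- Left-normed iterated commutator `[x, l₁, l₂, …]`. -/
noncomputable def lnorm (x : FL K G) (l : List (FL K G)) : FL K G := l.foldl (fun a b => ⁅a, b⁆) x

/-- The list `y₁^{(p₁)}, …, y_r^{(p_r)}` of trivial-degree variables with multiplicities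
(0-indexed: the variables are `x_{0,1}, …, x_{r-1,1}`). -/
noncomputable def yRun (p : ℕ → ℕ) : ℕ → List (FL K G)
  | 0 => []
  | n + 1 => yRun p n ++ List.replicate (p n) (of K (n, (1 : G)))

attribute [local instance 100] LieRing.ofAssociativeRing

/-- 3×3 matrices. -/
abbrev M3 (K : Type*) [Field K] := Matrix (Fin 3) (Fin 3) K

/-- Matrix units. -/
def E3 (i j : Fin 3) : M3 K := Matrix.single i j 1

/-- The elementary grading `Γ(g,h)` on upper triangular 3×3 matrices:
`deg e₁₁ = deg e₂₂ = deg e₃₃ = 1`, `deg e₁₂ = g`, `deg e₂₃ = h`, `deg e₁₃ = gh`.  The component of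
degree `l` is the span of the matrix units of degree `l`. -/
def utGrading (g h : G) : G → Submodule K (M3 K) := fun l =>
  Submodule.span K {m : M3 K |
    (l = 1 ∧ (m = E3 K 0 0 ∨ m = E3 K 1 1 ∨ m = E3 K 2 2)) ∨
    (l = g ∧ m = E3 K 0 1) ∨ (l = h ∧ m = E3 K 1 2) ∨ (l = g * h ∧ m = E3 K 0 2)}

/-- The support of the grading `Γ(g,h)`. -/
def utSupp (g h : G) : Set G := {l | utGrading K G g h l ≠ ⊥}

/-- The graded identities `Id_G(UT₃⁽⁻⁾, Γ(g,h))`. -/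
def IdUT3 (g h : G) : LieIdeal K (FL K G) := gradedIdeal K G (M3 K) (utGrading K G g h)

/-- 2×2 matrices. -/
abbrev M2 (K : Type*) [Field K] := Matrix (Fin 2) (Fin 2) K

/-- Matrix units. -/
def E2 (i j : Fin 2) : M2 K := Matrix.single i j 1

/-- The space of upper triangular 2×2 matrices, `UT₂⁽⁻⁾`. -/
def ut2 : Submodule K (M2 K) := Submodule.span K {E2 K 0 0, E2 K 1 1, E2 K 0 1}

/-- Ordinary (ungraded) Lie polynomial identities of `UT₂⁽⁻⁾`. -/
def IdUT2 : Set (FL K G) :=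
  {f | ∀ ψ : FL K G →ₗ⁅K⁆ M2 K, (∀ (i : ℕ) (g : G), ψ (of K (i, g)) ∈ ut2 K) → ψ f = 0}

/-- The free Lie subalgebra `L(Y)` on the trivial-degree variables. -/
noncomputable def LY : LieSubalgebra K (FL K G) :=
  LieSubalgebra.lieSpan K (FL K G) {a | ∃ i : ℕ, a = of K (i, (1 : G))}

/-- Exponent bound: `0 ≤ p ℓ < |K|` when `K` is finite (no bound when `K` is infinite). -/
def expOK (r : ℕ) (p : ℕ → ℕ) : Prop := ∀ ℓ < r, Finite K → p ℓ < Nat.card K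

end Framework

attribute [local instance 100] LieRing.ofAssociativeRing

/-! ## Statement 10 : Higman-order consequence for double commutators, almost universal grading -/
set_option linter.unusedSectionVars false
section Aux

variable {K : Type*} [Field K] {G : Type*} [CommGroup G]

/-- Weight of a degree-1 element acting on `e₁₂`. -/
def w1 (D : M3 K) : K := D 1 1 - D 0 0

/-- Weight of a degree-1 element acting on `e₂₃`. -/
def w2 (D : M3 K) : K := D 2 2 - D 1 1

lemma lnorm_nil (x : FL K G) : lnorm K G x [] = x := rfl

lemma lnorm_cons (x a : FL K G) (L : List (FL K G)) :
    lnorm K G x (a :: L) = lnorm K G ⁅x, a⁆ L := rfl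

lemma map_lnorm (χ : FL K G →ₗ⁅K⁆ M3 K) (x : FL K G) (L : List (FL K G)) :
    χ (lnorm K G x L) = (L.map χ).foldl (fun a b => ⁅a, b⁆) (χ x) := by
  induction L generalizing x with
  | nil => rfl
  | cons a L ih =>
      rw [lnorm_cons, ih, List.map_cons, List.foldl_cons, χ.map_lie]

lemma bracket_w1 {g : G} (hg : g ^ 2 ≠ 1) {D : M3 K}
    (hD : D ∈ utGrading K G g g⁻¹ 1) (α : K) :
    ⁅α • E3 K 0 1, D⁆ = (α * w1 D) • E3 K 0 1 := by
  have hg1 : g ≠ 1 := by rintro rfl; simp at hg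
  induction hD using Submodule.span_induction with
  | mem m hm =>
      have h1g : (1 : G) ≠ g := fun h => hg1 h.symm
      have h1gi : (1 : G) ≠ g⁻¹ := by
        intro h; exact hg1 (inv_eq_one.mp h.symm)
      rcases hm with ⟨-, (rfl | rfl | rfl)⟩ | ⟨h, -⟩ | ⟨h, -⟩ | ⟨-, rfl⟩
      · ext i j
        fin_cases i <;> fin_cases j <;>
          simp [E3, w1, Ring.lie_def, Matrix.mul_apply, Matrix.single, Fin.sum_univ_succ]
      · ext i j
        fin_cases i <;> fin_cases j <;>
          simp [E3, w1, Ring.lie_def, Matrix.mul_apply, Matrix.single, Fin.sum_univ_succ]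
      · ext i j
        fin_cases i <;> fin_cases j <;>
          simp [E3, w1, Ring.lie_def, Matrix.mul_apply, Matrix.single, Fin.sum_univ_succ]
      · exact absurd h.symm hg1
      · exact absurd h h1gi
      · ext i j
        fin_cases i <;> fin_cases j <;>
          simp [E3, w1, Ring.lie_def, Matrix.mul_apply, Matrix.single, Fin.sum_univ_succ]
  | zero => simp [w1]
  | add a b _ _ ha hb =>
      rw [lie_add, ha, hb]
      simp only [w1, Matrix.add_apply]
      rw [← add_smul]; ring_nf
  | smul c a _ ha =>
      rw [lie_smul, ha]
      simp only [w1, Matrix.smul_apply, smul_eq_mul]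
      rw [smul_smul]; ring_nf

lemma bracket_w2 {g : G} (hg : g ^ 2 ≠ 1) {D : M3 K}
    (hD : D ∈ utGrading K G g g⁻¹ 1) (α : K) :
    ⁅α • E3 K 1 2, D⁆ = (α * w2 D) • E3 K 1 2 := by
  have hg1 : g ≠ 1 := by rintro rfl; simp at hg
  induction hD using Submodule.span_induction with
  | mem m hm =>
      rcases hm with ⟨-, (rfl | rfl | rfl)⟩ | ⟨h, -⟩ | ⟨h, -⟩ | ⟨-, rfl⟩
      · ext i j
        fin_cases i <;> fin_cases j <;>
          simp [E3, w2, Ring.lie_def, Matrix.mul_apply, Matrix.single, Fin.sum_univ_succ]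
      · ext i j
        fin_cases i <;> fin_cases j <;>
          simp [E3, w2, Ring.lie_def, Matrix.mul_apply, Matrix.single, Fin.sum_univ_succ]
      · ext i j
        fin_cases i <;> fin_cases j <;>
          simp [E3, w2, Ring.lie_def, Matrix.mul_apply, Matrix.single, Fin.sum_univ_succ]
      · exact absurd h.symm hg1
      · exact absurd (inv_eq_one.mp h.symm) hg1
      · ext i j
        fin_cases i <;> fin_cases j <;>
          simp [E3, w2, Ring.lie_def, Matrix.mul_apply, Matrix.single, Fin.sum_univ_succ]
  | zero => simp [w2]
  | add a b _ _ ha hb =>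
      rw [lie_add, ha, hb]
      simp only [w2, Matrix.add_apply]
      rw [← add_smul]; ring_nf
  | smul c a _ ha =>
      rw [lie_smul, ha]
      simp only [w2, Matrix.smul_apply, smul_eq_mul]
      rw [smul_smul]; ring_nf

lemma foldl_w1 {g : G} (hg : g ^ 2 ≠ 1) (L : List (M3 K))
    (hL : ∀ D ∈ L, D ∈ utGrading K G g g⁻¹ 1) (α : K) :
    L.foldl (fun a b => ⁅a, b⁆) (α • E3 K 0 1) = (α * (L.map w1).prod) • E3 K 0 1 := by
  induction L generalizing α with
  | nil => simp
  | cons a L ih =>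
      rw [List.foldl_cons, bracket_w1 hg (hL a List.mem_cons_self) α,
        ih (fun D hD => hL D (List.mem_cons_of_mem a hD)), List.map_cons, List.prod_cons]
      congr 1; ring

lemma foldl_w2 {g : G} (hg : g ^ 2 ≠ 1) (L : List (M3 K))
    (hL : ∀ D ∈ L, D ∈ utGrading K G g g⁻¹ 1) (α : K) :
    L.foldl (fun a b => ⁅a, b⁆) (α • E3 K 1 2) = (α * (L.map w2).prod) • E3 K 1 2 := by
  induction L generalizing α with
  | nil => simp
  | cons a L ih =>
      rw [List.foldl_cons, bracket_w2 hg (hL a List.mem_cons_self) α,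
        ih (fun D hD => hL D (List.mem_cons_of_mem a hD)), List.map_cons, List.prod_cons]
      congr 1; ring

lemma yRun_mem {p : ℕ → ℕ} {r : ℕ} {a : FL K G} (ha : a ∈ yRun K G p r) :
    ∃ j, j < r ∧ a = of K (j, (1 : G)) := by
  induction r with
  | zero => simp [yRun] at ha
  | succ r ih =>
      rw [yRun, List.mem_append] at ha
      rcases ha with h | h
      · obtain ⟨j, hj, rfl⟩ := ih h; exact ⟨j, Nat.lt_succ_of_lt hj, rfl⟩
      · exact ⟨r, Nat.lt_succ_self r, List.eq_of_mem_replicate h⟩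

lemma yRun_prod (χ : FL K G →ₗ⁅K⁆ M3 K) (w : M3 K → K) (p : ℕ → ℕ) (r : ℕ) :
    (((yRun K G p r).map χ).map w).prod
      = ∏ j ∈ Finset.range r, w (χ (of K (j, (1 : G)))) ^ p j := by
  induction r with
  | zero => simp [yRun]
  | succ r ih =>
      rw [yRun, List.map_append, List.map_append, List.prod_append, ih,
        Finset.prod_range_succ, List.map_replicate, List.map_replicate, List.prod_replicate]

lemma eval_lnorm_w1 {g : G} (hg : g ^ 2 ≠ 1) (χ : FL K G →ₗ⁅K⁆ M3 K)
    (hχ1 : ∀ j, χ (of K (j, (1 : G))) ∈ utGrading K G g g⁻¹ 1)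
    (x : FL K G) (α : K) (hx : χ x = α • E3 K 0 1) (p : ℕ → ℕ) (r : ℕ) :
    χ (lnorm K G x (yRun K G p r))
      = (α * ∏ j ∈ Finset.range r, w1 (χ (of K (j, (1 : G)))) ^ p j) • E3 K 0 1 := by
  rw [map_lnorm, hx, foldl_w1 hg _ ?_, yRun_prod]
  intro D hD
  obtain ⟨a, ha, rfl⟩ := List.mem_map.mp hD
  obtain ⟨j, _, rfl⟩ := yRun_mem ha
  exact hχ1 j

lemma eval_lnorm_w2 {g : G} (hg : g ^ 2 ≠ 1) (χ : FL K G →ₗ⁅K⁆ M3 K)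
    (hχ1 : ∀ j, χ (of K (j, (1 : G))) ∈ utGrading K G g g⁻¹ 1)
    (x : FL K G) (α : K) (hx : χ x = α • E3 K 1 2) (p : ℕ → ℕ) (r : ℕ) :
    χ (lnorm K G x (yRun K G p r))
      = (α * ∏ j ∈ Finset.range r, w2 (χ (of K (j, (1 : G)))) ^ p j) • E3 K 1 2 := by
  rw [map_lnorm, hx, foldl_w2 hg _ ?_, yRun_prod]
  intro D hD
  obtain ⟨a, ha, rfl⟩ := List.mem_map.mp hD
  obtain ⟨j, _, rfl⟩ := yRun_mem ha
  exact hχ1 j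
lemma smul_bracket_smul (a b : K) (x y : M3 K) : ⁅a • x, b • y⁆ = (a * b) • ⁅x, y⁆ := by
  simp only [Ring.lie_def, Matrix.smul_mul, Matrix.mul_smul, smul_smul]
  rw [mul_comm b a, ← smul_sub]

lemma mem_deg_g {g : G} (hg : g ^ 2 ≠ 1) {x : M3 K}
    (hx : x ∈ utGrading K G g g⁻¹ g) : ∃ α : K, x = α • E3 K 0 1 := by
  have hg1 : g ≠ 1 := by rintro rfl; simp at hg
  have hgi : g ≠ g⁻¹ := by
    intro h; apply hg; rw [pow_two]; nth_rewrite 2 [h]; group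
  have hset : utGrading K G g g⁻¹ g = Submodule.span K {E3 K 0 1} := by
    unfold utGrading
    congr 1
    ext x
    constructor
    · rintro (⟨h, -⟩ | ⟨-, rfl⟩ | ⟨h, -⟩ | ⟨h, -⟩)
      · exact absurd h hg1
      · rfl
      · exact absurd h hgi
      · rw [mul_inv_cancel] at h; exact absurd h hg1
    · rintro rfl; exact Or.inr (Or.inl ⟨rfl, rfl⟩)
  rw [hset, Submodule.mem_span_singleton] at hx
  obtain ⟨α, hα⟩ := hx
  exact ⟨α, hα.symm⟩

lemma mem_deg_gi {g : G} (hg : g ^ 2 ≠ 1) {x : M3 K}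
    (hx : x ∈ utGrading K G g g⁻¹ g⁻¹) : ∃ α : K, x = α • E3 K 1 2 := by
  have hg1 : g ≠ 1 := by rintro rfl; simp at hg
  have hgi : g ≠ g⁻¹ := by
    intro h; apply hg; rw [pow_two]; nth_rewrite 2 [h]; group
  have hset : utGrading K G g g⁻¹ g⁻¹ = Submodule.span K {E3 K 1 2} := by
    unfold utGrading
    congr 1
    ext x
    constructor
    · rintro (⟨h, -⟩ | ⟨h, -⟩ | ⟨-, rfl⟩ | ⟨h, -⟩)
      · exact absurd (inv_eq_one.mp h) hg1
      · exact absurd h.symm hgi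
      · rfl
      · rw [mul_inv_cancel] at h; exact absurd (inv_eq_one.mp h) hg1
    · rintro rfl; exact Or.inr (Or.inr (Or.inl ⟨rfl, rfl⟩))
  rw [hset, Submodule.mem_span_singleton] at hx
  obtain ⟨α, hα⟩ := hx
  exact ⟨α, hα.symm⟩

lemma isHom_lnorm {t : G} {x : FL K G} (hx : IsHom K G t x) {L : List (FL K G)}
    (hL : ∀ a ∈ L, IsHom K G 1 a) : IsHom K G t (lnorm K G x L) := by
  induction L generalizing x with
  | nil => exact hx
  | cons a L ih =>
      rw [lnorm_cons]
      refine ih ?_ (fun b hb => hL b (List.mem_cons_of_mem a hb))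
      have := IsHom.lie hx (hL a List.mem_cons_self)
      rwa [mul_one] at this

lemma isHom_yRun {p : ℕ → ℕ} {r : ℕ} : ∀ a ∈ yRun K G p r, IsHom K G 1 a := by
  intro a ha
  obtain ⟨j, -, rfl⟩ := yRun_mem ha
  exact IsHom.var j 1

lemma mem_sInf_ideal {x : FL K G} {S : Set (LieIdeal K (FL K G))} :
    x ∈ sInf S ↔ ∀ I ∈ S, x ∈ I := by
  have : x ∈ sInf S ↔ x ∈ (↑(sInf S) : Set (FL K G)) := Iff.rfl
  rw [this, LieSubmodule.coe_sInf]
  simp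

lemma prod_pow_split (c : ℕ → K) (k k' : ℕ → ℕ) (e : ℕ → ℕ) (n m : ℕ)
    (hem : ∀ i < n, e i < m) (hinj : ∀ i < n, ∀ i' < n, e i = e i' → i = i')
    (hle : ∀ i < n, k i ≤ k' (e i)) :
    ∏ j ∈ Finset.range m, c j ^ k' j =
      (∏ j ∈ Finset.range m,
        c j ^ (k' j - ∑ i ∈ Finset.range n, if e i = j then k i else 0)) *
      ∏ i ∈ Finset.range n, c (e i) ^ k i := by
  have hs : ∀ j, (∑ i ∈ Finset.range n, if e i = j then k i else 0) ≤ k' j := by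
    intro j
    by_cases hex : ∃ i, i < n ∧ e i = j
    · obtain ⟨i0, hi0, he0⟩ := hex
      have : (∑ i ∈ Finset.range n, if e i = j then k i else 0) = k i0 := by
        rw [Finset.sum_eq_single i0]
        · rw [if_pos he0]
        · intro b hb hne
          rw [if_neg]
          intro hbe
          exact hne (hinj b (Finset.mem_range.mp hb) i0 hi0 (hbe.trans he0.symm))
        · intro hni; exact absurd (Finset.mem_range.mpr hi0) hni
      rw [this, ← he0]
      exact hle i0 hi0
    · push_neg at hex
      have : (∑ i ∈ Finset.range n, if e i = j then k i else 0) = 0 :=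
        Finset.sum_eq_zero fun i hi => if_neg (hex i (Finset.mem_range.mp hi))
      rw [this]; exact Nat.zero_le _
  have h2 : ∏ i ∈ Finset.range n, c (e i) ^ k i
      = ∏ j ∈ Finset.range m, c j ^ (∑ i ∈ Finset.range n, if e i = j then k i else 0) := by
    have : ∀ j ∈ Finset.range m,
        c j ^ (∑ i ∈ Finset.range n, if e i = j then k i else 0)
          = ∏ i ∈ Finset.range n, if e i = j then c j ^ k i else 1 := by
      intro j _
      rw [← Finset.prod_pow_eq_pow_sum]
      exact Finset.prod_congr rfl fun i _ => by split <;> simp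
    rw [Finset.prod_congr rfl this, Finset.prod_comm]
    refine Finset.prod_congr rfl fun i hi => ?_
    rw [Finset.prod_eq_single (e i)]
    · rw [if_pos rfl]
    · intro b _ hne; exact if_neg fun hh => hne hh.symm
    · intro hni
      exact absurd (Finset.mem_range.mpr (hem i (Finset.mem_range.mp hi))) hni
  rw [h2, ← Finset.prod_mul_distrib]
  refine Finset.prod_congr rfl fun j _ => ?_
  rw [← pow_add, Nat.sub_add_cancel (hs j)]
variable (K G) in
/-- The graded substitution used in the proof. -/
noncomputable def subst [DecidableEq G] (g : G) (e d1 d2 : ℕ → ℕ) (m : ℕ) :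
    FL K G →ₗ⁅K⁆ FL K G :=
  FreeLieAlgebra.lift K fun q =>
    if q.2 = g then
      (if q.1 = 0 then lnorm K G (of K (0, g)) (yRun K G d1 m) else of K (q.1, g))
    else if q.2 = g⁻¹ then
      (if q.1 = 0 then lnorm K G (of K (0, g⁻¹)) (yRun K G d2 m) else of K (q.1, g⁻¹))
    else if q.2 = 1 then of K (e q.1, (1 : G)) else of K q

lemma subst_of_g [DecidableEq G] (g : G) (e d1 d2 : ℕ → ℕ) (m : ℕ) :
    subst K G g e d1 d2 m (of K (0, g)) = lnorm K G (of K (0, g)) (yRun K G d1 m) := by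
  rw [subst, lift_of_apply]
  simp

lemma subst_of_gi [DecidableEq G] {g : G} (hgi : g ≠ g⁻¹) (e d1 d2 : ℕ → ℕ) (m : ℕ) :
    subst K G g e d1 d2 m (of K (0, g⁻¹)) = lnorm K G (of K (0, g⁻¹)) (yRun K G d2 m) := by
  rw [subst, lift_of_apply]
  have h : ¬(g⁻¹ = g) := fun h => hgi h.symm
  simp [h]

lemma subst_of_one [DecidableEq G] {g : G} (hg1 : g ≠ 1) (e d1 d2 : ℕ → ℕ) (m : ℕ) (i : ℕ) :
    subst K G g e d1 d2 m (of K (i, (1 : G))) = of K (e i, (1 : G)) := by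
  rw [subst, lift_of_apply]
  have h1 : ¬((1 : G) = g) := fun h => hg1 h.symm
  have h2 : ¬((1 : G) = g⁻¹) := fun h => hg1 (inv_eq_one.mp h.symm)
  simp [h1, h2]

lemma subst_graded [DecidableEq G] (g : G) (e d1 d2 : ℕ → ℕ) (m : ℕ) :
    IsGradedSubst K G (subst K G g e d1 d2 m) := by
  intro i u
  rw [subst, lift_of_apply]
  dsimp only
  split_ifs with h1 h2 h3 h4 h5
  · subst h1; exact isHom_lnorm (IsHom.var 0 _) isHom_yRun
  · subst h1; exact IsHom.var i _
  · subst h3; exact isHom_lnorm (IsHom.var 0 _) isHom_yRun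
  · subst h3; exact IsHom.var i _
  · subst h5; exact IsHom.var (e i) 1
  · exact IsHom.var i u
end Aux


/-! ## Statement 10 : Higman-order consequence for double commutators, almost universal grading -/

/-- The Higman order on finite sequences: `l₁ ⪯ l₂` iff `l₂` has a sublist that dominates `l₁`
pointwise. -/
def Higman {α : Type*} (le : α → α → Prop) (l₁ l₂ : List α) : Prop :=
  ∃ l : List α, l.Sublist l₂ ∧ List.Forall₂ le l₁ l

/-- **Lemma.** For `f = [[x_g, y₁^{(k₁)},…,y_n^{(k_n)}], [x_{g⁻¹}, y₁^{(l₁)},…,y_n^{(l_n)}]]`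
and `h = [[x_g, y₁^{(k'₁)},…,y_m^{(k'_m)}], [x_{g⁻¹}, y₁^{(l'₁)},…,y_m^{(l'_m)}]]`, if
`V_f ⪯ V_h` in the Higman order on `D(ℕ₀²)`, then
`h ∈ ⟨f⟩^{T_G} + Id_G(UT₃⁽⁻⁾, Γ(g, g⁻¹))`. -/
theorem stmt10 (K : Type*) [Field K] [Infinite K] (G : Type*) [CommGroup G]
    (g : G) (hg : g ^ 2 ≠ 1) (n m : ℕ) (k l k' l' : ℕ → ℕ)
    (hH : Higman (· ≤ ·) ((List.range n).map (fun i => (k i, l i)))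
      ((List.range m).map (fun i => (k' i, l' i)))) :
    ⁅lnorm K G (of K (0, g)) (yRun K G k' m),
      lnorm K G (of K (0, g⁻¹)) (yRun K G l' m)⁆ ∈
      tClosure K G
        {⁅lnorm K G (of K (0, g)) (yRun K G k n),
          lnorm K G (of K (0, g⁻¹)) (yRun K G l n)⁆} ⊔
      IdUT3 K G g g⁻¹ := by
  classical
  have hg1 : g ≠ 1 := by rintro rfl; simp at hg
  have hgi : g ≠ g⁻¹ := by
    intro h; apply hg; rw [pow_two]; nth_rewrite 2 [h]; group
  obtain ⟨t, hsub, hfa⟩ := hH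
  have hlen2 : ((List.range m).map fun i => (k' i, l' i)).length = m := by simp
  have htn : t.length = n := by
    have := hfa.length_eq
    simpa using this.symm
  rw [List.sublist_iff_exists_fin_orderEmbedding_get_eq] at hsub
  obtain ⟨emb, hemb⟩ := hsub
  set eN : ℕ → ℕ := fun i =>
    if h : i < n then ((emb (Fin.cast htn.symm ⟨i, h⟩)) : ℕ) else i with heN
  have hem : ∀ i < n, eN i < m := by
    intro i hi
    have h5 : eN i < ((List.range m).map fun i => (k' i, l' i)).length := by
      simpa [heN, dif_pos hi] using (emb (Fin.cast htn.symm ⟨i, hi⟩)).isLt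
    omega
  have hval : ∀ i (hi : i < n),
      t.get (Fin.cast htn.symm ⟨i, hi⟩) = (k' (eN i), l' (eN i)) := by
    intro i hi
    rw [hemb, List.get_eq_getElem, List.getElem_map, List.getElem_range]
    simp [heN, dif_pos hi]
  have hkl : ∀ i < n, k i ≤ k' (eN i) ∧ l i ≤ l' (eN i) := by
    intro i hi
    rw [List.forall₂_iff_get] at hfa
    have h1 : i < ((List.range n).map fun i => (k i, l i)).length := by simpa using hi
    have h2 : i < t.length := by rw [htn]; exact hi
    have hq := hfa.2 i h1 h2
    have h3 : (⟨i, h2⟩ : Fin t.length) = Fin.cast htn.symm ⟨i, hi⟩ := rfl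
    rw [h3, hval i hi, List.get_eq_getElem, List.getElem_map, List.getElem_range] at hq
    exact ⟨hq.1, hq.2⟩
  have hinj : ∀ i < n, ∀ i' < n, eN i = eN i' → i = i' := by
    intro i hi i' hi' hee
    simp only [heN, dif_pos hi, dif_pos hi'] at hee
    simpa using congrArg Fin.val (emb.injective (Fin.val_injective hee))
  set d1 : ℕ → ℕ := fun j =>
    k' j - ∑ i ∈ Finset.range n, if eN i = j then k i else 0 with hd1
  set d2 : ℕ → ℕ := fun j =>
    l' j - ∑ i ∈ Finset.range n, if eN i = j then l i else 0 with hd2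
  have key1 : subst K G g eN d1 d2 m
      ⁅lnorm K G (of K (0, g)) (yRun K G k n),
        lnorm K G (of K (0, g⁻¹)) (yRun K G l n)⁆ ∈
      tClosure K G {⁅lnorm K G (of K (0, g)) (yRun K G k n),
        lnorm K G (of K (0, g⁻¹)) (yRun K G l n)⁆} :=
    mem_sInf_ideal.mpr fun I hI => hI.1 _ (subst_graded g eN d1 d2 m) _ (hI.2 rfl)
  have key2 : ⁅lnorm K G (of K (0, g)) (yRun K G k' m),
        lnorm K G (of K (0, g⁻¹)) (yRun K G l' m)⁆ -
      subst K G g eN d1 d2 m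
        ⁅lnorm K G (of K (0, g)) (yRun K G k n),
          lnorm K G (of K (0, g⁻¹)) (yRun K G l n)⁆ ∈ IdUT3 K G g g⁻¹ := by
    intro χ hχ
    rw [map_sub χ, sub_eq_zero]
    obtain ⟨α, hα⟩ := mem_deg_g hg (hχ 0 g)
    obtain ⟨β, hβ⟩ := mem_deg_gi hg (hχ 0 g⁻¹)
    have hχ1 : ∀ j, χ (of K (j, (1 : G))) ∈ utGrading K G g g⁻¹ 1 := fun j => hχ j 1
    have hcomp : ∀ x, χ (subst K G g eN d1 d2 m x)
        = (χ.comp (subst K G g eN d1 d2 m)) x := fun x => rfl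
    set χ' : FL K G →ₗ⁅K⁆ M3 K := χ.comp (subst K G g eN d1 d2 m) with hχ'
    have hχ'1 : ∀ j, χ' (of K (j, (1 : G))) ∈ utGrading K G g g⁻¹ 1 := by
      intro j
      rw [hχ', ← hcomp, subst_of_one hg1]
      exact hχ1 _
    have hx' : χ' (of K (0, g))
        = (α * ∏ j ∈ Finset.range m, w1 (χ (of K (j, (1 : G)))) ^ d1 j) • E3 K 0 1 := by
      rw [hχ', ← hcomp, subst_of_g]
      exact eval_lnorm_w1 hg χ hχ1 _ α hα d1 m
    have hy' : χ' (of K (0, g⁻¹))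
        = (β * ∏ j ∈ Finset.range m, w2 (χ (of K (j, (1 : G)))) ^ d2 j) • E3 K 1 2 := by
      rw [hχ', ← hcomp, subst_of_gi hgi]
      exact eval_lnorm_w2 hg χ hχ1 _ β hβ d2 m
    have hw1' : ∀ i, w1 (χ' (of K (i, (1 : G)))) = w1 (χ (of K (eN i, (1 : G)))) := by
      intro i; rw [hχ', ← hcomp, subst_of_one hg1]
    have hw2' : ∀ i, w2 (χ' (of K (i, (1 : G)))) = w2 (χ (of K (eN i, (1 : G)))) := by
      intro i; rw [hχ', ← hcomp, subst_of_one hg1]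
    have hP1 : ∏ j ∈ Finset.range m, w1 (χ (of K (j, (1 : G)))) ^ k' j
        = (∏ j ∈ Finset.range m, w1 (χ (of K (j, (1 : G)))) ^ d1 j)
          * ∏ i ∈ Finset.range n, w1 (χ (of K (eN i, (1 : G)))) ^ k i := by
      rw [hd1]
      exact prod_pow_split _ k k' eN n m hem hinj (fun i hi => (hkl i hi).1)
    have hP2 : ∏ j ∈ Finset.range m, w2 (χ (of K (j, (1 : G)))) ^ l' j
        = (∏ j ∈ Finset.range m, w2 (χ (of K (j, (1 : G)))) ^ d2 j)
          * ∏ i ∈ Finset.range n, w2 (χ (of K (eN i, (1 : G)))) ^ l i := by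
      rw [hd2]
      exact prod_pow_split _ l l' eN n m hem hinj (fun i hi => (hkl i hi).2)
    rw [hcomp, χ.map_lie, χ'.map_lie,
      eval_lnorm_w1 hg χ hχ1 _ α hα k' m,
      eval_lnorm_w2 hg χ hχ1 _ β hβ l' m,
      eval_lnorm_w1 hg χ' hχ'1 _ _ hx' k n,
      eval_lnorm_w2 hg χ' hχ'1 _ _ hy' l n]
    have hsc : (α * ∏ j ∈ Finset.range m, w1 (χ (of K (j, (1 : G)))) ^ k' j) *
        (β * ∏ j ∈ Finset.range m, w2 (χ (of K (j, (1 : G)))) ^ l' j)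
      = ((α * ∏ j ∈ Finset.range m, w1 (χ (of K (j, (1 : G)))) ^ d1 j) *
          ∏ i ∈ Finset.range n, w1 (χ (of K (eN i, (1 : G)))) ^ k i) *
        ((β * ∏ j ∈ Finset.range m, w2 (χ (of K (j, (1 : G)))) ^ d2 j) *
          ∏ i ∈ Finset.range n, w2 (χ (of K (eN i, (1 : G)))) ^ l i) := by
      rw [hP1, hP2]; ring
    simp only [hw1', hw2']
    rw [smul_bracket_smul, smul_bracket_smul, hsc]
  rw [LieSubmodule.mem_sup]
  exact ⟨_, key1, _, key2, by abel⟩
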